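/- For every n ≥ 2 and every natural number j, the number of minimal factorizations F ∈ 𝔐_n with M_1(F) = j equals the number of minimal factorizations F ∈ 𝔐_n with T_1(F) = j. -/

import Mathlib

/-- `F` is a minimal factorization of size `n`, i.e. a factorization of the cycle
`(1,2,…,n)` (represented as `finRotate n` on `Fin n`, where the element `i ∈ {1,…,n}`
corresponds to the index `i-1 : Fin n`) into `n-1` transpositions: each `F k` is a
transposition and the left-to-right product `τ₁ τ₂ ⋯ τ_{n-1}` (apply `τ₁` first)
equals the cycle. -/
def IsMinFact (n : ℕ) (F : Fin (n - 1) → Equiv.Perm (Fin n)) : Prop :=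
  (∀ k, (F k).IsSwap) ∧ (List.ofFn F).reverse.prod = finRotate n

/-- `T(F, x)`: the number of transpositions in `F` moving the element represented by `x`. -/
def Tcount {n : ℕ} (F : Fin (n - 1) → Equiv.Perm (Fin n)) (x : Fin n) : ℕ :=
  (Finset.univ.filter fun k : Fin (n - 1) => F k x ≠ x).card

/-- `M(F, x)`: the number of indices `1 ≤ k ≤ n-1` with `τ₁⋯τ_{k-1}(x) ≠ τ₁⋯τ_k(x)`,
i.e. the number of transpositions affecting the trajectory of `x` (left-to-right
partial products, so `τ₁⋯τ_k` is the product of the first `k` entries, applied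
`τ₁` first). -/
def Mcount {n : ℕ} (F : Fin (n - 1) → Equiv.Perm (Fin n)) (x : Fin n) : ℕ :=
  (Finset.univ.filter fun k : Fin (n - 1) =>
    ((List.ofFn F).take k.val).reverse.prod x ≠
      ((List.ofFn F).take (k.val + 1)).reverse.prod x).card

section Aux

variable {n : ℕ}

/-- Partial product `τ_k ⋯ τ_1` of the first `k` entries. -/
def Ppart (F : Fin (n - 1) → Equiv.Perm (Fin n)) (k : ℕ) : Equiv.Perm (Fin n) :=
  ((List.ofFn F).take k).reverse.prod

/-- Partial products of the reversed list. -/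
def Qpart (H : Fin (n - 1) → Equiv.Perm (Fin n)) (k : ℕ) : Equiv.Perm (Fin n) :=
  ((List.ofFn H).reverse.take k).prod

def Phi (F : Fin (n - 1) → Equiv.Perm (Fin n)) : Fin (n - 1) → Equiv.Perm (Fin n) :=
  fun k => (Ppart F (n - 2 - k))⁻¹ * Ppart F (n - 2 - k + 1)

def Psi (H : Fin (n - 1) → Equiv.Perm (Fin n)) : Fin (n - 1) → Equiv.Perm (Fin n) :=
  fun k => Qpart H (k + 1) * (Qpart H k)⁻¹

lemma Ppart_succ (F : Fin (n - 1) → Equiv.Perm (Fin n)) (k : ℕ) (hk : k < n - 1) :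
    Ppart F (k + 1) = F ⟨k, hk⟩ * Ppart F k := by
  have hlen : k < (List.ofFn F).length := by simpa using hk
  rw [Ppart, Ppart, List.take_succ, List.getElem?_eq_getElem hlen, Option.toList_some,
    List.reverse_append]
  simp [List.getElem_ofFn]

lemma Qpart_succ (H : Fin (n - 1) → Equiv.Perm (Fin n)) (k : ℕ) (hk : k < n - 1) :
    Qpart H (k + 1) = Qpart H k * H ⟨n - 2 - k, by omega⟩ := by
  have hlen : k < (List.ofFn H).reverse.length := by simpa using hk
  rw [Qpart, Qpart, List.take_succ, List.getElem?_eq_getElem hlen, Option.toList_some,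
    List.prod_append]
  have : (List.ofFn H).reverse[k] = H ⟨n - 2 - k, by omega⟩ := by
    rw [List.getElem_reverse]
    simp only [List.getElem_ofFn]
    congr 1
    ext
    simp
    omega
  rw [this]
  simp

lemma Qpart_Phi (F : Fin (n - 1) → Equiv.Perm (Fin n)) :
    ∀ k, k ≤ n - 1 → Qpart (Phi F) k = Ppart F k := by
  intro k
  induction k with
  | zero => intro _; simp [Qpart, Ppart]
  | succ k ih =>
    intro hk
    have hk' : k < n - 1 := hk
    rw [Qpart_succ _ _ hk', ih (le_of_lt hk'), Ppart_succ _ _ hk']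
    show Ppart F k * ((Ppart F (n - 2 - (n - 2 - k)))⁻¹ * Ppart F (n - 2 - (n - 2 - k) + 1)) = _
    have h2 : n - 2 - (n - 2 - k) = k := by omega
    rw [h2, Ppart_succ _ _ hk']
    group

lemma Psi_Phi (F : Fin (n - 1) → Equiv.Perm (Fin n)) : Psi (Phi F) = F := by
  funext k
  have hk := k.isLt
  show Qpart (Phi F) (k + 1) * (Qpart (Phi F) k)⁻¹ = F k
  rw [Qpart_Phi F (k + 1) (by omega), Qpart_Phi F k (by omega), Ppart_succ F k hk]
  simp [mul_assoc]

lemma Ppart_Psi (H : Fin (n - 1) → Equiv.Perm (Fin n)) :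
    ∀ k, k ≤ n - 1 → Ppart (Psi H) k = Qpart H k := by
  intro k
  induction k with
  | zero => intro _; simp [Qpart, Ppart]
  | succ k ih =>
    intro hk
    have hk' : k < n - 1 := hk
    rw [Ppart_succ _ _ hk', ih (le_of_lt hk')]
    show Qpart H (k + 1) * (Qpart H k)⁻¹ * Qpart H k = _
    simp [mul_assoc]

lemma Phi_Psi (H : Fin (n - 1) → Equiv.Perm (Fin n)) : Phi (Psi H) = H := by
  funext k
  have hk := k.isLt
  have h2 : n - 2 - (k : ℕ) < n - 1 := by omega
  show (Ppart (Psi H) (n - 2 - k))⁻¹ * Ppart (Psi H) (n - 2 - k + 1) = H k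
  rw [Ppart_Psi H _ (by omega), Ppart_Psi H _ (by omega), Qpart_succ H _ h2]
  have h3 : (⟨n - 2 - (n - 2 - (k : ℕ)), by omega⟩ : Fin (n - 1)) = k := by
    ext; simp; omega
  rw [h3]
  group

lemma prod_Phi (F : Fin (n - 1) → Equiv.Perm (Fin n)) :
    (List.ofFn (Phi F)).reverse.prod = (List.ofFn F).reverse.prod := by
  have h1 : (List.ofFn (Phi F)).reverse.prod = Qpart (Phi F) (n - 1) := by
    rw [Qpart, List.take_of_length_le (by simp)]
  rw [h1, Qpart_Phi F (n - 1) le_rfl, Ppart, List.take_of_length_le (by simp)]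

lemma prod_Psi (H : Fin (n - 1) → Equiv.Perm (Fin n)) :
    (List.ofFn (Psi H)).reverse.prod = (List.ofFn H).reverse.prod := by
  have h1 : (List.ofFn (Psi H)).reverse.prod = Ppart (Psi H) (n - 1) := by
    rw [Ppart, List.take_of_length_le (by simp)]
  rw [h1, Ppart_Psi H (n - 1) le_rfl, Qpart, List.take_of_length_le (by simp)]

lemma isSwap_Phi (F : Fin (n - 1) → Equiv.Perm (Fin n)) (hF : ∀ k, (F k).IsSwap)
    (k : Fin (n - 1)) : (Phi F k).IsSwap := by
  have h2 : n - 2 - (k : ℕ) < n - 1 := by have := k.isLt; omega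
  show ((Ppart F (n - 2 - k))⁻¹ * Ppart F (n - 2 - k + 1)).IsSwap
  rw [Ppart_succ _ _ h2]
  obtain ⟨x, y, hxy, hs⟩ := hF ⟨n - 2 - k, h2⟩
  refine ⟨(Ppart F (n - 2 - k))⁻¹ x, (Ppart F (n - 2 - k))⁻¹ y, by simp [hxy], ?_⟩
  rw [hs, Equiv.swap_apply_apply]
  group

lemma isSwap_Psi (H : Fin (n - 1) → Equiv.Perm (Fin n)) (hH : ∀ k, (H k).IsSwap)
    (k : Fin (n - 1)) : (Psi H k).IsSwap := by
  have hk := k.isLt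
  show (Qpart H (k + 1) * (Qpart H k)⁻¹).IsSwap
  rw [Qpart_succ _ _ hk]
  obtain ⟨x, y, hxy, hs⟩ := hH ⟨n - 2 - k, by omega⟩
  refine ⟨Qpart H k x, Qpart H k y, by simp [hxy], ?_⟩
  rw [hs, Equiv.swap_apply_apply]

lemma Tcount_Phi (F : Fin (n - 1) → Equiv.Perm (Fin n)) (x : Fin n) :
    Tcount (Phi F) x = Mcount F x := by
  unfold Tcount Mcount
  refine Finset.card_nbij' (fun k => ⟨n - 2 - k, by have := k.isLt; omega⟩)
    (fun k => ⟨n - 2 - k, by have := k.isLt; omega⟩) ?_ ?_ ?_ ?_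
  · intro k hk
    simp only [Finset.mem_coe, Finset.coe_filter, Set.mem_setOf_eq, Finset.mem_filter, Finset.mem_univ, true_and] at hk ⊢
    have h2 : n - 2 - (k : ℕ) < n - 1 := by have := k.isLt; omega
    have hP : ((List.ofFn F).take (n - 2 - (k : ℕ))).reverse.prod = Ppart F (n - 2 - k) := rfl
    have hP' : ((List.ofFn F).take (n - 2 - (k : ℕ) + 1)).reverse.prod
        = Ppart F (n - 2 - k + 1) := rfl
    rw [hP, hP']
    intro h
    apply hk
    show ((Ppart F (n - 2 - k))⁻¹ * Ppart F (n - 2 - k + 1)) x = x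
    rw [Equiv.Perm.mul_apply, ← h]
    simp
  · intro k hk
    simp only [Finset.mem_coe, Finset.coe_filter, Set.mem_setOf_eq, Finset.mem_filter, Finset.mem_univ, true_and] at hk ⊢
    have h2 : n - 2 - (k : ℕ) < n - 1 := by have := k.isLt; omega
    have h3 : n - 2 - (n - 2 - (k : ℕ)) = (k : ℕ) := by have := k.isLt; omega
    show ¬ ((Ppart F (n - 2 - (n - 2 - (k:ℕ))))⁻¹ * Ppart F (n - 2 - (n - 2 - (k:ℕ)) + 1)) x = x
    rw [h3]
    intro h
    apply hk
    have hP : ((List.ofFn F).take (k : ℕ)).reverse.prod = Ppart F k := rfl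
    have hP' : ((List.ofFn F).take ((k : ℕ) + 1)).reverse.prod = Ppart F ((k:ℕ) + 1) := rfl
    rw [hP, hP']
    have := congrArg (Ppart F k) h
    simpa using this.symm
  · intro k _; ext; simp; have := k.isLt; omega
  · intro k _; ext; simp; have := k.isLt; omega

end Aux

/-- the number of minimal factorizations with `M_1 = j` equals the
number of minimal factorizations with `T_1 = j` (the element `1` of `{1,…,n}` is
the index `0 : Fin n`). -/
theorem card_M1_eq_card_T1 (n : ℕ) (hn : 2 ≤ n) (j : ℕ) :
    Nat.card {F : Fin (n - 1) → Equiv.Perm (Fin n) //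
      IsMinFact n F ∧ Mcount F ⟨0, by omega⟩ = j} =
    Nat.card {F : Fin (n - 1) → Equiv.Perm (Fin n) //
      IsMinFact n F ∧ Tcount F ⟨0, by omega⟩ = j} := by
  apply Nat.card_congr
  refine Equiv.subtypeEquiv ⟨Phi, Psi, Psi_Phi, Phi_Psi⟩ ?_
  intro F
  simp only [Equiv.coe_fn_mk]
  constructor
  · rintro ⟨⟨hsw, hprod⟩, hM⟩
    exact ⟨⟨isSwap_Phi F hsw, by rw [prod_Phi]; exact hprod⟩, by rw [Tcount_Phi]; exact hM⟩
  · rintro ⟨⟨hsw, hprod⟩, hT⟩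
    refine ⟨⟨fun k => ?_, ?_⟩, ?_⟩
    · have := isSwap_Psi (Phi F) hsw k
      rwa [Psi_Phi] at this
    · have := prod_Psi (Phi F)
      rw [Psi_Phi] at this
      rw [this]
      exact hprod
    · rw [← Tcount_Phi]
      exact hT
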